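/- arXiv:2510.20515 — 2 statements merged into one kernel-verified Lean document; each statement's English description precedes it below -/
import Mathlib

section
/- Let X be uniformly distributed on the sphere of radius r_a = r_e + r_min, conditioned on being at distance greater than r_u ≥ r_min from an observer at distance r_e from the center. Then the probability that X is visible (i.e., at distance at most r_max = √(2 r_e r_min + r_min²) from the observer) equals P_I = (r_min - (r_u² - r_min²)/(2 r_e)) / (2 r_a - (r_u² - r_min²)/(2 r_e)). -/
/-- integrating the conditional distance density
`f(r | r_u) = 2 r / (4 r_e r_a - r_u² + r_min²)` from `r_u` to
`r_max = √(2 r_e r_min + r_min²)` gives the visibility probability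
`P_I = (r_min - (r_u² - r_min²)/(2 r_e)) / (2 r_a - (r_u² - r_min²)/(2 r_e))`. -/
theorem visibility_probability
    (r_e r_min : ℝ) (he : 0 < r_e) (hm : 0 < r_min)
    (r_a : ℝ) (hra : r_a = r_e + r_min)
    (r_max : ℝ) (hrmax : r_max = Real.sqrt (2 * r_e * r_min + r_min ^ 2))
    (r_u : ℝ) (hru1 : r_min ≤ r_u) (hru2 : r_u ≤ r_max) :
    ∫ r in r_u..r_max, 2 * r / (4 * r_e * r_a - r_u ^ 2 + r_min ^ 2)
      = (r_min - (r_u ^ 2 - r_min ^ 2) / (2 * r_e))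
        / (2 * r_a - (r_u ^ 2 - r_min ^ 2) / (2 * r_e)) := by
  have hpos : (0:ℝ) ≤ 2 * r_e * r_min + r_min ^ 2 := by positivity
  have hmax2 : r_max ^ 2 = 2 * r_e * r_min + r_min ^ 2 := by
    rw [hrmax, Real.sq_sqrt hpos]
  have hu2 : r_u ^ 2 ≤ 2 * r_e * r_min + r_min ^ 2 := by
    rw [← hmax2]
    have hru0 : 0 ≤ r_u := le_trans hm.le hru1
    nlinarith
  have hD : 4 * r_e * r_a - r_u ^ 2 + r_min ^ 2 ≠ 0 := by
    rw [hra]; nlinarith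
  have hstep : ∀ r : ℝ, 2 * r / (4 * r_e * r_a - r_u ^ 2 + r_min ^ 2)
      = (2 / (4 * r_e * r_a - r_u ^ 2 + r_min ^ 2)) * r := fun r => by ring
  simp only [hstep]
  rw [intervalIntegral.integral_const_mul, integral_id]
  have hD2 : 2 * r_a - (r_u ^ 2 - r_min ^ 2) / (2 * r_e) ≠ 0 := by
    rw [hra]
    intro h
    have := he.ne'
    field_simp at h
    nlinarith
  have hD3 : 2 * r_a * (2 * r_e) - (r_u ^ 2 - r_min ^ 2) ≠ 0 := by
    rw [hra]; nlinarith
  field_simp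
  rw [eq_div_iff (by intro h; apply hD; linear_combination h)]
  linear_combination (4 * r_e * r_a - r_u ^ 2 + r_min ^ 2) * hmax2
end

section
/- Let H be a nonnegative random variable following Shadowed Rician fading with integer Nakagami parameter m ≥ 1 and parameters b > 0, Ω > 0; set μ = (1/(2b)) (2bm/(2bm+Ω))^m, δ = (1/(2b)) (Ω/(2bm+Ω)), β = 1/(2b). Then the complementary CDF of the power gain |H|² is P(|H|² > x) = μ Σ_{n=0}^{m-1} ((1-m)_n (-δ)^n / (n!)²) Σ_{l=0}^{n} (n!/l!) x^l e^{-(β-δ)x} (β-δ)^{-(n+1-l)} for x ≥ 0. In particular, this expression evaluated at x = 0 equals 1, i.e., μ Σ_{n=0}^{m-1} ((1-m)_n (-δ)^n / (n!)²) n! (β-δ)^{-(n+1)} = 1. -/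
open MeasureTheory

section SRaux
open Filter

lemma SR_hasDerivAt (c : ℝ) (hc : 0 < c) (n : ℕ) (y : ℝ) :
    HasDerivAt (fun y : ℝ => -(∑ l ∈ Finset.range (n+1),
        ((n.factorial : ℝ) / (l.factorial : ℝ)) * y ^ l * Real.exp (-c * y)
          * c ^ (-(n:ℤ) - 1 + l)))
      (y ^ n * Real.exp (-c * y)) y := by
  have hexp : HasDerivAt (fun y : ℝ => Real.exp (-c * y)) (Real.exp (-c * y) * (-c)) y := by
    simpa using ((hasDerivAt_id y).const_mul (-c)).exp
  have hterm : ∀ l : ℕ, HasDerivAt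
      (fun y : ℝ => ((n.factorial : ℝ) / (l.factorial : ℝ)) * y ^ l * Real.exp (-c * y)
        * c ^ (-(n:ℤ) - 1 + l))
      ((((n.factorial : ℝ) / (l.factorial : ℝ)) * ((l:ℝ) * y ^ (l-1)) * Real.exp (-c * y)
        + ((n.factorial : ℝ) / (l.factorial : ℝ)) * y ^ l * (Real.exp (-c * y) * (-c)))
        * c ^ (-(n:ℤ) - 1 + l)) y := fun l =>
    ((((hasDerivAt_pow l y).const_mul _).mul hexp).mul_const _)
  have hsum := (HasDerivAt.fun_sum (fun l (_ : l ∈ Finset.range (n+1)) => hterm l)).fun_neg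
  refine hsum.congr_deriv ?_
  symm
  set E := Real.exp (-c * y) with hE
  set D : ℕ → ℝ := fun l => (((n.factorial : ℝ) / (l.factorial : ℝ)) * ((l:ℝ) * y ^ (l-1)) * E
        + ((n.factorial : ℝ) / (l.factorial : ℝ)) * y ^ l * (E * (-c)))
        * c ^ (-(n:ℤ) - 1 + l) with hD
  set H : ℕ → ℝ := fun l => ((n.factorial : ℝ) / (l.factorial : ℝ)) * y ^ l * E * c ^ (-(n:ℤ) + l)
    with hH
  have key : ∀ l : ℕ, D (l+1) = H l - H (l+1) := by
    intro l
    have h1 : ((-(n:ℤ)) - 1 + ((l+1:ℕ):ℤ)) = -(n:ℤ) + l := by push_cast; ring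
    have h2 : (-(n:ℤ) + ((l+1:ℕ):ℤ)) = (-(n:ℤ) + l) + 1 := by push_cast; ring
    simp only [hD, hH, h1, h2, zpow_add_one₀ hc.ne']
    have hfl : (((l+1).factorial : ℝ)) = ((l:ℝ)+1) * (l.factorial : ℝ) := by
      rw [Nat.factorial_succ]; push_cast; ring
    rw [hfl]
    have hl0 : (l.factorial : ℝ) ≠ 0 := Nat.cast_ne_zero.mpr l.factorial_ne_zero
    have hl1 : ((l:ℝ)+1) ≠ 0 := by positivity
    have h3 : (l + 1 - 1 : ℕ) = l := rfl
    rw [h3]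
    push_cast
    field_simp
    ring
  have hD0 : D 0 = -H 0 := by
    simp only [hD, hH]
    have : ((-(n:ℤ)) - 1 + ((0:ℕ):ℤ)) + 1 = -(n:ℤ) + ((0:ℕ):ℤ) := by push_cast; ring
    rw [← this, zpow_add_one₀ hc.ne']
    simp
    ring
  have hHn : H n = y ^ n * E := by
    simp only [hH]
    rw [div_self (Nat.cast_ne_zero.mpr n.factorial_ne_zero)]
    simp
  calc y ^ n * E = -(-(H n)) := by rw [neg_neg, hHn]
    _ = -(∑ l ∈ Finset.range (n+1), D l) := by
        rw [Finset.sum_range_succ']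
        simp only [key, hD0]
        rw [Finset.sum_range_sub']
        ring

lemma SR_tendsto (c : ℝ) (hc : 0 < c) (n : ℕ) :
    Tendsto (fun y : ℝ => -(∑ l ∈ Finset.range (n+1),
        ((n.factorial : ℝ) / (l.factorial : ℝ)) * y ^ l * Real.exp (-c * y)
          * c ^ (-(n:ℤ) - 1 + l))) atTop (nhds 0) := by
  have h0 : ∀ l : ℕ, Tendsto (fun y : ℝ => y ^ l * Real.exp (-c * y)) atTop (nhds 0) := by
    intro l
    have h1 := (Real.tendsto_pow_mul_exp_neg_atTop_nhds_zero l).comp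
      (Tendsto.const_mul_atTop hc tendsto_id)
    have h2 := h1.const_mul ((c ^ l)⁻¹)
    rw [mul_zero] at h2
    refine h2.congr fun y => ?_
    simp only [Function.comp_apply, id]
    rw [mul_pow]
    field_simp
  have : Tendsto (fun y : ℝ => ∑ l ∈ Finset.range (n+1),
      ((n.factorial : ℝ) / (l.factorial : ℝ)) * y ^ l * Real.exp (-c * y)
        * c ^ (-(n:ℤ) - 1 + l)) atTop (nhds 0) := by
    have := tendsto_finset_sum (Finset.range (n+1)) (fun l _ =>
      (((h0 l).const_mul ((n.factorial : ℝ) / (l.factorial : ℝ))).mul_const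
        (c ^ (-(n:ℤ) - 1 + l))))
    simpa [mul_assoc] using this
  simpa using this.neg

lemma SR_integral (c : ℝ) (hc : 0 < c) (n : ℕ) (x : ℝ) (hx : 0 ≤ x) :
    IntegrableOn (fun t : ℝ => t ^ n * Real.exp (-c * t)) (Set.Ioi x) ∧
    ∫ t in Set.Ioi x, t ^ n * Real.exp (-c * t)
      = ∑ l ∈ Finset.range (n+1),
          ((n.factorial : ℝ) / (l.factorial : ℝ)) * x ^ l * Real.exp (-c * x)
            * c ^ (-(n:ℤ) - 1 + l) := by
  have hderiv : ∀ y ∈ Set.Ici x, HasDerivAt (fun y : ℝ => -(∑ l ∈ Finset.range (n+1),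
        ((n.factorial : ℝ) / (l.factorial : ℝ)) * y ^ l * Real.exp (-c * y)
          * c ^ (-(n:ℤ) - 1 + l))) (y ^ n * Real.exp (-c * y)) y :=
    fun y _ => SR_hasDerivAt c hc n y
  have hpos : ∀ y ∈ Set.Ioi x, 0 ≤ y ^ n * Real.exp (-c * y) := by
    intro y hy
    have : (0:ℝ) ≤ y := le_trans hx (le_of_lt hy)
    positivity
  have htend := SR_tendsto c hc n
  refine ⟨integrableOn_Ioi_deriv_of_nonneg' hderiv hpos htend, ?_⟩
  rw [integral_Ioi_of_hasDerivAt_of_nonneg' hderiv hpos htend]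
  ring

end SRaux

/-- complementary CDF of the Shadowed Rician power gain with integer
Nakagami parameter `m ≥ 1`: integrating the gamma-mixture density
`f(t) = μ' Σ_{n<m} ((1-m)_n (-δ t)^n/(n!)²) e^{-(β-δ)t}` over `(x, ∞)` yields the
stated finite double sum, and the expression at `x = 0` equals `1`. -/
theorem shadowed_rician_ccdf
    (b Ωp : ℝ) (hb : 0 < b) (hΩ : 0 < Ωp) (m : ℕ) (hm : 1 ≤ m)
    (μ' δ β : ℝ)
    (hμ : μ' = (1 / (2 * b)) * (2 * b * m / (2 * b * m + Ωp)) ^ m)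
    (hδ : δ = (1 / (2 * b)) * (Ωp / (2 * b * m + Ωp)))
    (hβ : β = 1 / (2 * b))
    (f : ℝ → ℝ)
    (hf : ∀ t, f t = μ' * (∑ n ∈ Finset.range m,
      (ascPochhammer ℝ n).eval (1 - (m : ℝ)) * (-δ * t) ^ n / ((n.factorial : ℝ)) ^ 2)
        * Real.exp (-(β - δ) * t)) :
    (∀ x : ℝ, 0 ≤ x →
      ∫ t in Set.Ioi x, f t
        = μ' * ∑ n ∈ Finset.range m,
            ((ascPochhammer ℝ n).eval (1 - (m : ℝ)) * (-δ) ^ n / ((n.factorial : ℝ)) ^ 2)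
            * ∑ l ∈ Finset.range (n + 1),
                ((n.factorial : ℝ) / (l.factorial : ℝ)) * x ^ l
                  * Real.exp (-(β - δ) * x) * (β - δ) ^ (-(n : ℤ) - 1 + l)) ∧
    μ' * ∑ n ∈ Finset.range m,
        ((ascPochhammer ℝ n).eval (1 - (m : ℝ)) * (-δ) ^ n / ((n.factorial : ℝ)) ^ 2)
          * (n.factorial : ℝ) * (β - δ) ^ (-(n : ℤ) - 1) = 1 := by
  have hmR : (0:ℝ) < (m:ℝ) := by exact_mod_cast hm
  have hs : (0:ℝ) < 2 * b * m + Ωp := by positivity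
  have hcval : β - δ = (m:ℝ) / (2 * b * m + Ωp) := by
    rw [hβ, hδ]; field_simp; ring
  have hc : 0 < β - δ := by rw [hcval]; positivity
  set c : ℝ := β - δ with hcdef
  -- Pochhammer fact
  have hA : ∀ n : ℕ, (ascPochhammer ℝ n).eval (1 - (m : ℝ)) * (-δ) ^ n
      = (((m-1).descFactorial n : ℕ) : ℝ) * δ ^ n := by
    intro n
    have h1 : (1 - (m:ℝ)) = -(((m-1:ℕ):ℝ)) := by
      rw [Nat.cast_sub hm]; push_cast; ring
    rw [h1, ascPochhammer_eval_neg_eq_descPochhammer,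
      descPochhammer_eval_eq_descFactorial]
    rw [neg_pow δ n]
    ring_nf
    have h2 : (-1:ℝ)^(n*2) = 1 := by rw [mul_comm, pow_mul]; norm_num
    rw [h2, mul_one]
  constructor
  · -- CCDF formula
    intro x hx
    have hfs : ∀ t : ℝ, f t = ∑ n ∈ Finset.range m,
        (μ' * ((ascPochhammer ℝ n).eval (1 - (m : ℝ)) * (-δ) ^ n / ((n.factorial : ℝ)) ^ 2))
          * (t ^ n * Real.exp (-c * t)) := by
      intro t
      rw [hf t, Finset.mul_sum, Finset.sum_mul]
      refine Finset.sum_congr rfl fun n _ => ?_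
      rw [mul_pow]
      ring_nf
    simp only [hfs]
    rw [integral_finset_sum _ (fun n _ => ((SR_integral c hc n x hx).1.const_mul _))]
    rw [Finset.mul_sum]
    refine Finset.sum_congr rfl fun n _ => ?_
    rw [MeasureTheory.integral_const_mul, (SR_integral c hc n x hx).2]
    ring
  · -- normalization
    have step1 : ∀ n ∈ Finset.range m,
        ((ascPochhammer ℝ n).eval (1 - (m : ℝ)) * (-δ) ^ n / ((n.factorial : ℝ)) ^ 2)
          * (n.factorial : ℝ) * c ^ (-(n : ℤ) - 1)
        = (((m-1).choose n : ℕ) : ℝ) * δ ^ n * c ^ (-(n : ℤ) - 1) := by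
      intro n _
      rw [hA n, Nat.descFactorial_eq_factorial_mul_choose]
      have hn0 : ((n.factorial : ℝ)) ≠ 0 := Nat.cast_ne_zero.mpr n.factorial_ne_zero
      push_cast
      field_simp
    rw [Finset.sum_congr rfl step1]
    have step2 : ∀ n ∈ Finset.range m,
        (((m-1).choose n : ℕ) : ℝ) * δ ^ n * c ^ (-(n : ℤ) - 1)
        = c ^ (-(m:ℤ)) * (δ ^ n * c ^ ((m-1-n : ℕ)) * (((m-1).choose n : ℕ) : ℝ)) := by
      intro n hn
      have hnm : n ≤ m - 1 := Nat.le_sub_one_of_lt (Finset.mem_range.mp hn)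
      have he : (-(n:ℤ) - 1) = (-(m:ℤ)) + ((m-1-n : ℕ):ℤ) := by
        have : ((m-1-n : ℕ):ℤ) = (m:ℤ) - 1 - n := by
          push_cast [Nat.cast_sub hnm, Nat.cast_sub hm]; ring
        rw [this]; ring
      rw [he, zpow_add₀ hc.ne', zpow_natCast]
      ring
    rw [Finset.sum_congr rfl step2, ← Finset.mul_sum]
    have hrange : m = (m - 1) + 1 := (Nat.sub_add_cancel hm).symm
    have hbinom : ∑ n ∈ Finset.range m, δ ^ n * c ^ ((m-1-n : ℕ)) * (((m-1).choose n : ℕ) : ℝ)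
        = (δ + c) ^ (m - 1) := by
      rw [hrange]; exact (add_pow δ c (m-1)).symm
    rw [hbinom]
    have hdc : δ + c = β := by rw [hcdef]; ring
    rw [hdc]
    have hkey : μ' * β ^ (m-1) = c ^ m := by
      rw [hμ, hβ, hcval]
      have h2b : (2*b) ≠ 0 := by positivity
      have hp : (1/(2*b)) * (1/(2*b)) ^ (m-1) = (1/(2*b)) ^ m := by
        rw [← pow_succ', Nat.sub_add_cancel hm]
      rw [mul_comm (1/(2*b)) _, mul_assoc, hp, ← mul_pow]
      congr 1
      field_simp
    calc μ' * (c ^ (-(m:ℤ)) * β ^ (m-1)) = (μ' * β ^ (m-1)) * c ^ (-(m:ℤ)) := by ring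
      _ = c ^ m * c ^ (-(m:ℤ)) := by rw [hkey]
      _ = 1 := by
          rw [← zpow_natCast c m, ← zpow_add₀ hc.ne']
          simp
end
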